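/- Let g:[0,∞)→[0,∞) be continuous with g(0)=0, and fix s ≥ 0. For every a ∈ [0, g(s)] set w(a) = inf{r ∈ [0,s] : m_g(r,s) = a}. Then g(w(a)) = a for every a ∈ [0, g(s)], and for all 0 ≤ a ≤ b ≤ g(s) one has m_g(w(a), w(b)) = a, and consequently d_g(w(a), w(b)) = b − a. -/

import Mathlib

open Set Filter NNReal Topology

/-- `m_g(s,t) = inf { g(r) : s ∧ t ≤ r ≤ s ∨ t }`. -/
noncomputable def mg (g : ℝ≥0 → ℝ) (s t : ℝ≥0) : ℝ :=
  sInf (g '' Set.Icc (min s t) (max s t))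

/-- `d_g(s,t) = g(s) + g(t) - 2 m_g(s,t)`. -/
noncomputable def dg (g : ℝ≥0 → ℝ) (s t : ℝ≥0) : ℝ :=
  g s + g t - 2 * mg g s t

/-- `w(a) = inf { r ∈ [0,s] : m_g(r,s) = a }`. -/
noncomputable def wg (g : ℝ≥0 → ℝ) (s : ℝ≥0) (a : ℝ) : ℝ≥0 :=
  sInf {r : ℝ≥0 | r ≤ s ∧ mg g r s = a}

section aux
variable {g : ℝ≥0 → ℝ}

lemma mg_of_le (g : ℝ≥0 → ℝ) {r s : ℝ≥0} (h : r ≤ s) :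
    mg g r s = sInf (g '' Set.Icc r s) := by
  rw [mg, min_eq_left h, max_eq_right h]

lemma bddBelow_img (hnn : ∀ x, 0 ≤ g x) (A : Set ℝ≥0) : BddBelow (g '' A) :=
  ⟨0, fun y ⟨x, _, hx⟩ => hx ▸ hnn x⟩

lemma mg_le_apply (hnn : ∀ x, 0 ≤ g x) {r s x : ℝ≥0} (h1 : r ≤ x) (h2 : x ≤ s) :
    mg g r s ≤ g x := by
  rw [mg_of_le g (h1.trans h2)]
  exact csInf_le (bddBelow_img hnn _) ⟨x, ⟨h1, h2⟩, rfl⟩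

lemma le_mg {r s : ℝ≥0} {c : ℝ} (h : r ≤ s) (H : ∀ x ∈ Set.Icc r s, c ≤ g x) :
    c ≤ mg g r s := by
  rw [mg_of_le g h]
  exact le_csInf ⟨g r, r, ⟨le_refl r, h⟩, rfl⟩ (fun y ⟨x, hx, hxy⟩ => hxy ▸ H x hx)

lemma mg_mono (hnn : ∀ x, 0 ≤ g x) {r r' s : ℝ≥0} (h : r ≤ r') (h' : r' ≤ s) :
    mg g r s ≤ mg g r' s := by
  rw [mg_of_le g (h.trans h'), mg_of_le g h']
  exact csInf_le_csInf (bddBelow_img hnn _) ⟨g r', r', ⟨le_refl _, h'⟩, rfl⟩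
    (Set.image_mono (Set.Icc_subset_Icc h (le_refl s)))

lemma mg_self (g : ℝ≥0 → ℝ) (s : ℝ≥0) : mg g s s = g s := by
  rw [mg_of_le g (le_refl s), Set.Icc_self, Set.image_singleton, csInf_singleton]

/-- Key construction: if `a ≤ mg g p s`, there is `t ≤ p` with `g t = a` and
`mg g t s = a` (namely the last time before `p` that `g` is `≤ a`). -/
lemma key (hcont : Continuous g) (hnn : ∀ x, 0 ≤ g x) (h0 : g 0 = 0) {s p : ℝ≥0}
    (hp : p ≤ s) {a : ℝ} (ha : 0 ≤ a) (hab : a ≤ mg g p s) :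
    ∃ t, t ≤ p ∧ g t = a ∧ mg g t s = a := by
  set T := {r : ℝ≥0 | r ≤ p ∧ g r ≤ a} with hT
  have hTne : T.Nonempty := ⟨0, (zero_le : (0:ℝ≥0) ≤ p), by rw [h0]; exact ha⟩
  have hTbdd : BddAbove T := ⟨p, fun r hr => hr.1⟩
  have hTclosed : IsClosed T := isClosed_Iic.inter (isClosed_Iic.preimage hcont)
  set t := sSup T with ht
  have htT : t ∈ T := hTclosed.csSup_mem hTne hTbdd
  have htp : t ≤ p := htT.1
  have hts : t ≤ s := htp.trans hp
  have h1 : ∀ x, t < x → x ≤ p → a < g x := fun x hx hxp =>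
    lt_of_not_ge fun hle => absurd (le_csSup hTbdd ⟨hxp, hle⟩) (not_le.2 hx)
  have h2 : ∀ x, p ≤ x → x ≤ s → a ≤ g x := fun x hx hxs =>
    hab.trans (mg_le_apply hnn hx hxs)
  have hgt : g t = a := by
    refine le_antisymm htT.2 ?_
    by_contra hlt
    push_neg at hlt
    have htp' : t < p := by
      rcases lt_or_eq_of_le htp with h | h
      · exact h
      · exact absurd (h ▸ hlt) (not_lt.2 (h2 p le_rfl hp))
    have hU : g ⁻¹' Set.Iio a ∈ 𝓝 t :=
      (isOpen_Iio.preimage hcont).mem_nhds hlt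
    obtain ⟨u, hu, hsub⟩ := exists_Ico_subset_of_mem_nhds hU ⟨p, htp'⟩
    obtain ⟨x, hx1, hx2⟩ := exists_between (lt_min hu htp')
    have hxT : x ∈ T :=
      ⟨(hx2.trans_le (min_le_right _ _)).le,
        (hsub ⟨hx1.le, hx2.trans_le (min_le_left _ _)⟩).le⟩
    exact absurd (le_csSup hTbdd hxT) (not_le.2 hx1)
  refine ⟨t, htp, hgt, le_antisymm (hgt ▸ mg_le_apply hnn le_rfl hts) ?_⟩
  refine le_mg hts fun x ⟨hx1, hx2⟩ => ?_
  rcases le_or_gt x p with hxp | hpx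
  · rcases eq_or_lt_of_le hx1 with h | h
    · exact h ▸ hgt.ge
    · exact (h1 x h hxp).le
  · exact h2 x hpx.le hx2

/-- Main properties of `wg`. -/
lemma w_spec (hcont : Continuous g) (hnn : ∀ x, 0 ≤ g x) (h0 : g 0 = 0) {s : ℝ≥0}
    {a : ℝ} (ha : 0 ≤ a) (has : a ≤ g s) :
    wg g s a ≤ s ∧ g (wg g s a) = a ∧ mg g (wg g s a) s = a := by
  have hab : a ≤ mg g s s := by rw [mg_self]; exact has
  obtain ⟨t, hts, hgt, hmt⟩ := key hcont hnn h0 le_rfl ha hab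
  set S := {r : ℝ≥0 | r ≤ s ∧ mg g r s = a} with hS
  have htS : t ∈ S := ⟨hts, hmt⟩
  have hw : wg g s a = sInf S := rfl
  set w := wg g s a with hwdef
  have hwt : w ≤ t := hw ▸ csInf_le (OrderBot.bddBelow S) htS
  have hws : w ≤ s := hwt.trans hts
  have hIoc : ∀ x ∈ Set.Ioc w s, a ≤ g x := by
    rintro x ⟨hwx, hxs⟩
    obtain ⟨r, hrS, hrx⟩ := exists_lt_of_csInf_lt ⟨t, htS⟩ (hw ▸ hwx)
    exact hrS.2 ▸ mg_le_apply hnn hrx.le hxs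
  have hgw : a ≤ g w := by
    rcases eq_or_lt_of_le hws with heq | hlt
    · rw [heq]; exact has
    · have hcl : IsClosed {x : ℝ≥0 | a ≤ g x} := isClosed_le continuous_const hcont
      have hmem : w ∈ closure (Set.Ioc w s) := by
        rw [closure_Ioc hlt.ne]
        exact ⟨le_refl w, hws⟩
      exact closure_minimal (fun y hy => hIoc y hy) hcl hmem
  have hax : ∀ x ∈ Set.Icc w s, a ≤ g x := fun x ⟨hx1, hx2⟩ =>
    hx1.eq_or_lt.elim (fun h => h ▸ hgw) (fun h => hIoc x ⟨h, hx2⟩)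
  have hmw : mg g w s = a :=
    le_antisymm (hmt ▸ mg_mono hnn hwt hts) (le_mg hws hax)
  refine ⟨hws, le_antisymm ?_ hgw, hmw⟩
  by_contra hlt
  push_neg at hlt
  have hw0 : w ≠ 0 := by
    rintro h
    rw [h, h0] at hlt
    exact absurd ha (not_le.2 hlt)
  have hU : g ⁻¹' Set.Ioi a ∈ 𝓝 w :=
    (isOpen_Ioi.preimage hcont).mem_nhds hlt
  obtain ⟨u, hu, hsub⟩ := exists_Ioc_subset_of_mem_nhds hU ⟨0, pos_iff_ne_zero.mpr hw0⟩
  obtain ⟨u', hu'1, hu'2⟩ := exists_between hu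
  have hu's : u' ≤ s := hu'2.le.trans hws
  have hu'S : u' ∈ S := by
    refine ⟨hu's, le_antisymm (hmw ▸ mg_mono hnn hu'2.le hws) ?_⟩
    refine le_mg hu's fun x ⟨hx1, hx2⟩ => ?_
    rcases le_or_gt x w with hxw | hwx
    · exact (hsub ⟨hu'1.trans_le hx1, hxw⟩).le
    · exact hIoc x ⟨hwx, hx2⟩
  exact absurd (hw ▸ csInf_le (OrderBot.bddBelow S) hu'S) (not_le.2 hu'2)

lemma w_mono (hcont : Continuous g) (hnn : ∀ x, 0 ≤ g x) (h0 : g 0 = 0) {s : ℝ≥0}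
    {a b : ℝ} (ha : 0 ≤ a) (hab : a ≤ b) (hbs : b ≤ g s) : wg g s a ≤ wg g s b := by
  obtain ⟨hwbs, _, hmwb⟩ := w_spec hcont hnn h0 (ha.trans hab) hbs
  have hab' : a ≤ mg g (wg g s b) s := by rw [hmwb]; exact hab
  obtain ⟨t, htp, _, hmt⟩ := key hcont hnn h0 hwbs ha hab'
  have htmem : t ∈ {r : ℝ≥0 | r ≤ s ∧ mg g r s = a} := ⟨htp.trans hwbs, hmt⟩
  exact (csInf_le (OrderBot.bddBelow _) htmem).trans htp

end aux

/-- **Statement 7**: for continuous `g : [0,∞) → [0,∞)` with `g(0) = 0`, fixed `s ≥ 0`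
and `w(a) = inf{r ∈ [0,s] : m_g(r,s) = a}`, one has `g(w(a)) = a` for `a ∈ [0, g(s)]`,
and `m_g(w(a), w(b)) = a` and `d_g(w(a), w(b)) = b - a` for `0 ≤ a ≤ b ≤ g(s)`. -/
theorem stmt7 (g : ℝ≥0 → ℝ) (hcont : Continuous g) (hnn : ∀ x, 0 ≤ g x)
    (h0 : g 0 = 0) (s : ℝ≥0) :
    (∀ a : ℝ, 0 ≤ a → a ≤ g s → g (wg g s a) = a) ∧
    (∀ a b : ℝ, 0 ≤ a → a ≤ b → b ≤ g s →
      mg g (wg g s a) (wg g s b) = a ∧ dg g (wg g s a) (wg g s b) = b - a) := by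
  constructor
  · intro a ha has
    exact (w_spec hcont hnn h0 ha has).2.1
  · intro a b ha hab hbs
    have has : a ≤ g s := hab.trans hbs
    obtain ⟨hwas, hgwa, hmwa⟩ := w_spec hcont hnn h0 ha has
    obtain ⟨hwbs, hgwb, hmwb⟩ := w_spec hcont hnn h0 (ha.trans hab) hbs
    have hw : wg g s a ≤ wg g s b := w_mono hcont hnn h0 ha hab hbs
    have hm : mg g (wg g s a) (wg g s b) = a := by
      rw [mg, min_eq_left hw, max_eq_right hw]
      refine le_antisymm (csInf_le (bddBelow_img hnn _) ⟨_, ⟨le_refl _, hw⟩, hgwa⟩) ?_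
      refine le_csInf ⟨g (wg g s a), _, ⟨le_refl _, hw⟩, rfl⟩ ?_
      rintro y ⟨x, ⟨hx1, hx2⟩, rfl⟩
      exact hmwa ▸ mg_le_apply hnn hx1 (hx2.trans hwbs)
    refine ⟨hm, ?_⟩
    rw [dg, hm, hgwa, hgwb]
    ring
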